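/- For every natural number n and every real y with −1 < y < 1, the second derivative of the Chebyshev polynomial of the first kind satisfies |T_n''(y)| ≤ n(n+1)/(1 − y²)^{3/2}. -/

import Mathlib

open Real Polynomial

/-- Bound on the second derivative of Chebyshev polynomials:
for `-1 < y < 1`, `|T_n''(y)| ≤ n(n+1)/(1-y²)^{3/2}`. -/
theorem chebyshev_T_second_derivative_bound (n : ℕ) (y : ℝ)
    (hy₁ : -1 < y) (hy₂ : y < 1) :
    |(Polynomial.derivative (Polynomial.derivative
        (Polynomial.Chebyshev.T ℝ (n : ℤ)))).eval y|
      ≤ (n : ℝ) * (n + 1) / (1 - y ^ 2) ^ ((3 : ℝ) / 2) := by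
  set P := Polynomial.Chebyshev.T ℝ (n : ℤ) with hP
  -- first derivative identity for all θ
  have h1 : ∀ θ : ℝ, (derivative P).eval (cos θ) * (-sin θ) = -sin ((n:ℝ) * θ) * n := by
    intro θ
    have hf : HasDerivAt (fun θ : ℝ => P.eval (cos θ))
        ((derivative P).eval (cos θ) * (-sin θ)) θ :=
      (P.hasDerivAt (cos θ)).comp θ (hasDerivAt_cos θ)
    have hg : HasDerivAt (fun θ : ℝ => cos ((n:ℝ) * θ)) (-sin ((n:ℝ) * θ) * n) θ := by
      have := (hasDerivAt_cos ((n:ℝ) * θ)).comp θ ((hasDerivAt_id θ).const_mul (n:ℝ))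
      simpa [Function.comp_def, mul_comm] using this
    have heq : (fun θ : ℝ => P.eval (cos θ)) = fun θ : ℝ => cos ((n:ℝ) * θ) := by
      funext t; simp [hP]
    rw [heq] at hf
    exact hf.unique hg
  -- second derivative identity for all θ
  have h2 : ∀ θ : ℝ,
      (derivative (derivative P)).eval (cos θ) * (-sin θ) * (-sin θ)
        + (derivative P).eval (cos θ) * (-cos θ)
      = -cos ((n:ℝ) * θ) * n * n := by
    intro θ
    have hf : HasDerivAt (fun θ : ℝ => (derivative P).eval (cos θ) * (-sin θ))
        ((derivative (derivative P)).eval (cos θ) * (-sin θ) * (-sin θ)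
          + (derivative P).eval (cos θ) * (-cos θ)) θ := by
      have hA : HasDerivAt (fun θ : ℝ => (derivative P).eval (cos θ))
          ((derivative (derivative P)).eval (cos θ) * (-sin θ)) θ :=
        ((derivative P).hasDerivAt (cos θ)).comp θ (hasDerivAt_cos θ)
      have hB : HasDerivAt (fun θ : ℝ => -sin θ) (-cos θ) θ := (hasDerivAt_sin θ).neg
      exact (hA.mul hB).congr_deriv (by ring)
    have hg : HasDerivAt (fun θ : ℝ => -sin ((n:ℝ) * θ) * n)
        (-cos ((n:ℝ) * θ) * n * n) θ := by
      have := (((hasDerivAt_sin ((n:ℝ) * θ)).comp θ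
        ((hasDerivAt_id θ).const_mul (n:ℝ))).neg).mul_const (n:ℝ)
      simpa [Function.comp_def, mul_comm, mul_assoc, mul_left_comm] using this
    have heq : (fun θ : ℝ => (derivative P).eval (cos θ) * (-sin θ))
        = fun θ : ℝ => -sin ((n:ℝ) * θ) * n := funext h1
    rw [heq] at hf
    exact hf.unique hg
  -- specialize at θ = arccos y
  set θ := Real.arccos y with hθ
  have hcos : cos θ = y := Real.cos_arccos hy₁.le hy₂.le
  set s := Real.sqrt (1 - y ^ 2) with hs
  have hy2 : 0 < 1 - y ^ 2 := by nlinarith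
  have hs0 : 0 < s := Real.sqrt_pos.mpr hy2
  have hs1 : s ≤ 1 := by
    rw [hs]; exact Real.sqrt_le_one.mpr (by nlinarith)
  have hsin : sin θ = s := by
    rw [hθ, Real.sin_arccos, hs]
  have hssq : s ^ 2 = 1 - y ^ 2 := Real.sq_sqrt hy2.le
  -- bounds
  have hTb : |cos ((n:ℝ) * θ)| ≤ 1 := abs_cos_le_one _
  have hT'b : |(derivative P).eval y| ≤ n / s := by
    have := h1 θ
    rw [hcos, hsin] at this
    have h' : (derivative P).eval y = sin ((n:ℝ) * θ) * n / s := by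
      field_simp at this ⊢; linarith
    rw [h', abs_div, abs_of_pos hs0]
    gcongr
    calc |sin ((n:ℝ) * θ) * n| = |sin ((n:ℝ) * θ)| * n := by
            rw [abs_mul, Nat.abs_cast]
      _ ≤ 1 * n := by gcongr; exact abs_sin_le_one _
      _ = n := one_mul _
  -- second derivative formula
  have hT'' : (derivative (derivative P)).eval y
      = ((derivative P).eval y * y - cos ((n:ℝ) * θ) * n * n) / s ^ 2 := by
    have := h2 θ
    rw [hcos, hsin] at this
    field_simp
    nlinarith [this]
  -- powers
  have hpow : (1 - y ^ 2) ^ ((3 : ℝ) / 2) = s ^ 3 := by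
    rw [hs, ← Real.rpow_natCast (Real.sqrt (1 - y ^ 2)) 3, Real.sqrt_eq_rpow,
      ← Real.rpow_mul hy2.le]
    norm_num
  rw [hT'', hpow, abs_div, abs_of_pos (by positivity : (0:ℝ) < s ^ 2)]
  rw [div_le_div_iff₀ (by positivity) (by positivity)]
  have hyabs : |y| ≤ 1 := abs_le.mpr ⟨hy₁.le, hy₂.le⟩
  have key : |(derivative P).eval y * y - cos ((n:ℝ) * θ) * n * n|
      ≤ (n / s) * 1 + 1 * n * n := by
    calc |(derivative P).eval y * y - cos ((n:ℝ) * θ) * n * n|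
        ≤ |(derivative P).eval y * y| + |cos ((n:ℝ) * θ) * n * n| := abs_sub _ _
      _ ≤ (n / s) * 1 + 1 * n * n := by
          simp only [abs_mul, Nat.abs_cast]
          gcongr
  calc |(derivative P).eval y * y - cos ((n:ℝ) * θ) * n * n| * s ^ 3
      ≤ ((n / s) * 1 + 1 * n * n) * s ^ 3 := by gcongr
    _ = (n * s ^ 2 + n * n * s ^ 3) := by field_simp
    _ ≤ (n * (n + 1)) * s ^ 2 := by
        have hn : (0:ℝ) ≤ n := n.cast_nonneg
        have hcube : s ^ 3 ≤ s ^ 2 := by nlinarith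
        nlinarith [mul_le_mul_of_nonneg_left hcube (mul_nonneg hn hn)]
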